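/- Let g ≥ 1 and fix 0 < ε < 1. Let (T, X₁, …, X_g) be n×n complex matrices with each Xₖ self-adjoint, T invertible, and TT* + Σₖ Xₖ² ≤ (1 − ε)I. Write TT* + Σₖ Xₖ² = I − AA* for some matrix A. Let C be a positive invertible n×n matrix with norm small enough that B* := −T⁻¹AC* satisfies BB* + CC* ≤ I. Set S = [[T, A],[B, C]] (2n×2n), Y₁ = [[X₁, 0],[0, D]] with D = (I − BB* − CC*)^{1/2}, and Yₖ = [[Xₖ, 0],[0, 0]] for k ≥ 2. Then S is invertible, each Yₖ is self-adjoint, and SS* + Σₖ Yₖ² = I. -/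

import Mathlib

open Matrix
open scoped ComplexOrder

lemma aux_posDef_mul_conjTranspose_self {m : ℕ} {T : Matrix (Fin m) (Fin m) ℂ}
    (hT : IsUnit T) : (T * Tᴴ).PosDef := by
  refine PosDef.of_dotProduct_mulVec_pos (isHermitian_mul_conjTranspose_self T) fun x hx => ?_
  have hy : Tᴴ *ᵥ x ≠ 0 := by
    intro h
    exact hx <| (Matrix.mulVec_injective_iff_isUnit.mpr ((isUnit_conjTranspose _).mpr hT)).eq_iff.mp
      (by simpa using h)
  have : star x ⬝ᵥ (T * Tᴴ) *ᵥ x = star (Tᴴ *ᵥ x) ⬝ᵥ (Tᴴ *ᵥ x) := by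
    rw [← mulVec_mulVec, dotProduct_mulVec, star_mulVec, conjTranspose_conjTranspose]
  rw [this]
  exact dotProduct_star_self_pos_iff.mpr hy

lemma aux_fromBlocks_sum {ι : Type*} {m : ℕ} (s : Finset ι)
    (f1 f2 f3 f4 : ι → Matrix (Fin m) (Fin m) ℂ) :
    ∑ k ∈ s, fromBlocks (f1 k) (f2 k) (f3 k) (f4 k)
      = fromBlocks (∑ k ∈ s, f1 k) (∑ k ∈ s, f2 k) (∑ k ∈ s, f3 k) (∑ k ∈ s, f4 k) := by
  ext (i | i) (j | j) <;> simp [Matrix.sum_apply, fromBlocks]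

/-- Corollary 2.10 (dilation construction): a strictly contractive tuple
`(T, X₁, …, X_g)` with `T` invertible dilates to a tuple `(S, Y₁, …, Y_g)` with
`S` invertible and `S S* + ∑ Yₖ² = I`. -/
theorem stmt_7 (n g : ℕ) (hg : 1 ≤ g) (ε : ℝ) (hε0 : 0 < ε) (hε1 : ε < 1)
    (T : Matrix (Fin n) (Fin n) ℂ) (X : Fin g → Matrix (Fin n) (Fin n) ℂ)
    (hXsa : ∀ k, (X k).IsHermitian) (hT : IsUnit T)
    (hcontr : (((1 - ε : ℝ) : ℂ) • 1 - (T * Tᴴ + ∑ k, X k * X k)).PosSemidef)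
    (A : Matrix (Fin n) (Fin n) ℂ)
    (hA : T * Tᴴ + ∑ k, X k * X k = 1 - A * Aᴴ)
    (C : Matrix (Fin n) (Fin n) ℂ) (hC : C.PosDef)
    (B : Matrix (Fin n) (Fin n) ℂ) (hB : Bᴴ = -(T⁻¹ * A * Cᴴ))
    (hBC : (1 - (B * Bᴴ + C * Cᴴ)).PosSemidef)
    (D : Matrix (Fin n) (Fin n) ℂ) (hD : D.PosSemidef)
    (hDsq : D * D = 1 - (B * Bᴴ + C * Cᴴ))
    (S : Matrix (Fin n ⊕ Fin n) (Fin n ⊕ Fin n) ℂ)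
    (hS : S = fromBlocks T A B C)
    (Y : Fin g → Matrix (Fin n ⊕ Fin n) (Fin n ⊕ Fin n) ℂ)
    (hY : ∀ k, Y k = if k = (⟨0, hg⟩ : Fin g) then fromBlocks (X k) 0 0 D
      else fromBlocks (X k) 0 0 0) :
    IsUnit S ∧ (∀ k, (Y k).IsHermitian) ∧ S * Sᴴ + ∑ k, Y k * Y k = 1 := by
  have hTdet : IsUnit T.det := (isUnit_iff_isUnit_det T).mp hT
  have hTinv : T * T⁻¹ = 1 := mul_nonsing_inv T hTdet
  -- off-diagonal blocks of S Sᴴ vanish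
  have hTB : T * Bᴴ + A * Cᴴ = 0 := by
    rw [hB, mul_neg, ← mul_assoc, ← mul_assoc, hTinv, one_mul, neg_add_cancel]
  have hBT : B * Tᴴ + C * Aᴴ = 0 := by
    have h := congrArg conjTranspose hTB
    simpa [conjTranspose_add, conjTranspose_mul] using h
  have hSS : S * Sᴴ = fromBlocks (T * Tᴴ + A * Aᴴ) 0 0 (B * Bᴴ + C * Cᴴ) := by
    rw [hS, fromBlocks_conjTranspose, fromBlocks_multiply, hTB, hBT]
  -- the sum of the squares
  have hYsq : ∀ k, Y k * Y k
      = fromBlocks (X k * X k) 0 0 (if k = (⟨0, hg⟩ : Fin g) then D * D else 0) := by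
    intro k
    rw [hY k]
    split_ifs with h <;> simp [fromBlocks_multiply]
  have hSum : ∑ k, Y k * Y k = fromBlocks (∑ k, X k * X k) 0 0 (D * D) := by
    simp_rw [hYsq]
    rw [aux_fromBlocks_sum]
    congr 1 <;> simp
  refine ⟨?_, ?_, ?_⟩
  · -- invertibility of S
    have hP : (T * Tᴴ + A * Aᴴ).PosDef :=
      (aux_posDef_mul_conjTranspose_self hT).add_posSemidef
        (posSemidef_self_mul_conjTranspose A)
    have hQ : (B * Bᴴ + C * Cᴴ).PosDef :=
      Matrix.PosDef.posSemidef_add (posSemidef_self_mul_conjTranspose B)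
        (aux_posDef_mul_conjTranspose_self hC.isUnit)
    have hdet : IsUnit ((S * Sᴴ).det) := by
      rw [hSS, det_fromBlocks_zero₁₂]
      exact (hP.det_pos.ne'.isUnit).mul (hQ.det_pos.ne'.isUnit)
    rw [det_mul] at hdet
    exact (isUnit_iff_isUnit_det S).mpr (isUnit_of_mul_isUnit_left hdet)
  · intro k
    rw [hY k]
    split_ifs with h <;>
      simp [Matrix.IsHermitian, fromBlocks_conjTranspose, (hXsa k).eq, hD.isHermitian.eq]
  · have h1 : T * Tᴴ + A * Aᴴ + ∑ k, X k * X k = 1 := by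
      rw [add_right_comm, hA, sub_add_cancel]
    have h2 : B * Bᴴ + C * Cᴴ + D * D = 1 := by
      rw [hDsq, add_sub_cancel]
    rw [hSS, hSum, fromBlocks_add, add_zero, h1, h2, fromBlocks_one]
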